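/- arXiv:2201.11820 — 3 statements merged into one kernel-verified Lean document; each statement's English description precedes it below -/
import Mathlib

section
/- Let p, q be primes with p > q, and k the least positive integer with q | (kp - 1). If 1 ≤ k ≤ q/2 (i.e. 2k ≤ q), then q - 2k is the least nonnegative integer m such that q divides mp + 2. -/
/-- If `(p,q)` is of type 1 (`2k ≤ q` for the least positive `k` with `q ∣ kp-1`),
then `q - 2k` is the least nonnegative integer `m` with `q ∣ m*p + 2`. -/
theorem stmt_1 (p q k : ℕ) (hp : p.Prime) (hq : q.Prime) (hpq : q < p)
    (hk_pos : 0 < k) (hk_dvd : q ∣ (k * p - 1))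
    (hk_min : ∀ k' : ℕ, 0 < k' → q ∣ (k' * p - 1) → k ≤ k')
    (htype1 : 2 * k ≤ q) :
    q ∣ ((q - 2 * k) * p + 2) ∧ ∀ m : ℕ, q ∣ (m * p + 2) → q - 2 * k ≤ m := by
  haveI : Fact q.Prime := ⟨hq⟩
  have hqp : ¬ q ∣ p := by
    intro h
    rw [Nat.prime_dvd_prime_iff_eq hq hp] at h
    omega
  have hkp1 : 1 ≤ k * p := Nat.mul_pos hk_pos hp.pos
  -- (k*p : ZMod q) = 1
  have hzk : ((k : ZMod q) * p) = 1 := by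
    have h2 : ((k * p - 1 : ℕ) : ZMod q) = 0 := (ZMod.natCast_eq_zero_iff _ _).mpr hk_dvd
    rw [Nat.cast_sub hkp1] at h2
    push_cast at h2
    linear_combination h2
  have hdvd1 : q ∣ ((q - 2 * k) * p + 2) := by
    rw [← ZMod.natCast_eq_zero_iff]
    push_cast [Nat.cast_sub htype1]
    rw [ZMod.natCast_self]
    linear_combination (-2 : ZMod q) * hzk
  refine ⟨hdvd1, fun m hm => ?_⟩
  by_contra hlt
  push_neg at hlt
  have hmlt : m < q - 2 * k := by omega
  have hpne : (p : ZMod q) ≠ 0 := fun h => hqp ((ZMod.natCast_eq_zero_iff _ _).mp h)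
  have hz1 : ((m : ZMod q)) * p = ((q - 2 * k : ℕ) : ZMod q) * p := by
    have h1 : ((m * p + 2 : ℕ) : ZMod q) = 0 := (ZMod.natCast_eq_zero_iff _ _).mpr hm
    have h2 : (((q - 2 * k) * p + 2 : ℕ) : ZMod q) = 0 := (ZMod.natCast_eq_zero_iff _ _).mpr hdvd1
    push_cast at h1 h2
    linear_combination h1 - h2
  have hz2 : (m : ZMod q) = ((q - 2 * k : ℕ) : ZMod q) := mul_right_cancel₀ hpne hz1
  have hmod : m ≡ (q - 2 * k) [MOD q] := (ZMod.natCast_eq_natCast_iff _ _ _).mp hz2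
  have : m % q = (q - 2 * k) % q := hmod
  rw [Nat.mod_eq_of_lt (by omega), Nat.mod_eq_of_lt (by omega)] at this
  omega
end

section
/- With M, c, p, n as above (2M + c = p, M ≥ g ≥ 1, n = qg + 2r -1), let kg + r - 1 ≥ l_1 > l_2 > ... > l_r ≥ 1 be integers and define m_1, ..., m_r by the inequalities (m_i - 1)M ≤ nM + (r-i)c - l_i p < m_i M for i = 1, ..., r. Then m_i + 2 ≤ m_{i+1} for i = 1, ..., r-1, and 1 ≤ m_1, m_r < n. -/
/-- With `2M + c = p`, `M ≥ g ≥ 1`, `n = qg + 2r - 1`, and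
`kg + r - 1 ≥ l₁ > ⋯ > l_r ≥ 1`, the integers `m_i` defined by
`(m_i - 1)M ≤ nM + (r-i)c - l_i p < m_i M` satisfy `m_i + 2 ≤ m_{i+1}`,
`1 ≤ m_1`, and `m_r < n`. -/
theorem stmt_12 (p : ℕ) (hp : p.Prime) (q k g n M c : ℤ) (r : ℕ) (hr : 0 < r)
    (hq : 0 < q) (hk : 0 < k) (hg : 1 ≤ g)
    (hn : n = q * g + 2 * (r : ℤ) - 1)
    (hM : q * M = k * p - 1) (hc : q * c = (q - 2 * k) * p + 2)
    (hMpos : 0 < M) (hcpos : 0 < c) (hMg : g ≤ M) (hp2Mc : 2 * M + c = p)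
    (l m : Fin r → ℤ)
    (hl_dec : ∀ i j : Fin r, i < j → l j < l i)
    (hl_lb : ∀ i, 1 ≤ l i) (hl_ub : ∀ i, l i ≤ k * g + (r : ℤ) - 1)
    (hm : ∀ i : Fin r,
      (m i - 1) * M ≤ n * M + ((r : ℤ) - 1 - (i : ℕ)) * c - l i * p ∧
      n * M + ((r : ℤ) - 1 - (i : ℕ)) * c - l i * p < m i * M) :
    (∀ i j : Fin r, (i : ℕ) + 1 = (j : ℕ) → m i + 2 ≤ m j) ∧
      1 ≤ m ⟨0, hr⟩ ∧ m ⟨r - 1, Nat.sub_lt hr Nat.one_pos⟩ < n := by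
  have hppos : (0 : ℤ) < (p : ℤ) := by exact_mod_cast hp.pos
  refine ⟨?_, ?_, ?_⟩
  · intro i j hij
    have hAi := (hm i).1
    have hAj := (hm j).2
    have hlt : i < j := by exact Fin.lt_def.mpr (by omega)
    have hl' : l j + 1 ≤ l i := hl_dec i j hlt
    have hji : ((j : ℕ) : ℤ) = ((i : ℕ) : ℤ) + 1 := by exact_mod_cast hij.symm
    have hjc : ((j : ℕ) : ℤ) * c = ((i : ℕ) : ℤ) * c + c := by rw [hji]; ring
    have hlp : l j * p + p ≤ l i * p := by
      have := mul_le_mul_of_nonneg_right hl' hppos.le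
      linarith [this]
    have hkey : (m i + 1) * M < m j * M := by nlinarith [hAi, hAj, hjc, hlp, hp2Mc]
    have := lt_of_mul_lt_mul_right hkey hMpos.le
    omega
  · set i0 : Fin r := ⟨0, hr⟩ with hi0
    have hz : ((i0 : ℕ) : ℤ) = 0 := by simp [hi0]
    have hA := (hm i0).2
    rw [hz] at hA
    rw [sub_zero] at hA
    have e : n * M + ((r : ℤ) - 1) * c - (k * g + (r : ℤ) - 1) * (p : ℤ) = M - g := by
      linear_combination M * hn + g * hM + ((r : ℤ) - 1) * hp2Mc
    have h1 : l i0 * (p : ℤ) ≤ (k * g + (r : ℤ) - 1) * (p : ℤ) :=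
      mul_le_mul_of_nonneg_right (hl_ub i0) hppos.le
    have hA0 : (0 : ℤ) ≤ n * M + ((r : ℤ) - 1) * c - l i0 * p := by nlinarith [e, h1, hMg]
    have hmpos : 0 < m i0 * M := lt_of_le_of_lt hA0 hA
    by_contra h
    push_neg at h
    nlinarith [hmpos, hMpos, h]
  · set ir : Fin r := ⟨r - 1, Nat.sub_lt hr Nat.one_pos⟩ with hir
    have hz : ((ir : ℕ) : ℤ) = (r : ℤ) - 1 := by
      simp only [hir]
      omega
    have hA := (hm ir).1
    rw [hz] at hA
    have hlp : (p : ℤ) ≤ l ir * p := le_mul_of_one_le_left hppos.le (hl_lb ir)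
    have hkey : (m ir - 1) * M < (n - 2) * M := by nlinarith [hA, hlp, hp2Mc, hcpos]
    have := lt_of_mul_lt_mul_right hkey hMpos.le
    omega
end

section
/- With the same setup (2M + c = p, M ≥ g, n = qg + 2r - 1), the map sending a strictly decreasing tuple (l_1 > ... > l_r ≥ 1) with l_1 ≤ kg + r - 1 to the tuple (m_1, ..., m_r) defined by (m_i - 1)M ≤ nM + (r-i)c - l_i p < m_i M is injective: distinct tuples (l_i) and (l_i') yield distinct tuples (m_i) and (m_i'). -/
/-- The map `(l_1 > ⋯ > l_r) ↦ (m_1, ..., m_r)` defined by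
`(m_i - 1)M ≤ nM + (r-i)c - l_i p < m_i M` is injective: distinct tuples
`(l_i)` and `(l_i')` give distinct tuples `(m_i)` and `(m_i')`. -/
theorem stmt_13 (p : ℕ) (hp : p.Prime) (q k g n M c : ℤ) (r : ℕ) (hr : 0 < r)
    (hq : 0 < q) (hk : 0 < k) (hg : 1 ≤ g)
    (hn : n = q * g + 2 * (r : ℤ) - 1)
    (hM : q * M = k * p - 1) (hc : q * c = (q - 2 * k) * p + 2)
    (hMpos : 0 < M) (hcpos : 0 < c) (hMg : g ≤ M) (hp2Mc : 2 * M + c = p)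
    (l l' m m' : Fin r → ℤ)
    (hl_dec : ∀ i j : Fin r, i < j → l j < l i)
    (hl_lb : ∀ i, 1 ≤ l i) (hl_ub : ∀ i, l i ≤ k * g + (r : ℤ) - 1)
    (hl'_dec : ∀ i j : Fin r, i < j → l' j < l' i)
    (hl'_lb : ∀ i, 1 ≤ l' i) (hl'_ub : ∀ i, l' i ≤ k * g + (r : ℤ) - 1)
    (hm : ∀ i : Fin r,
      (m i - 1) * M ≤ n * M + ((r : ℤ) - 1 - (i : ℕ)) * c - l i * p ∧
      n * M + ((r : ℤ) - 1 - (i : ℕ)) * c - l i * p < m i * M)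
    (hm' : ∀ i : Fin r,
      (m' i - 1) * M ≤ n * M + ((r : ℤ) - 1 - (i : ℕ)) * c - l' i * p ∧
      n * M + ((r : ℤ) - 1 - (i : ℕ)) * c - l' i * p < m' i * M)
    (hne : ∃ i : Fin r, l i ≠ l' i) :
    ∃ i : Fin r, m i ≠ m' i := by
  obtain ⟨i, hi⟩ := hne
  refine ⟨i, fun hmm => hi ?_⟩
  obtain ⟨h1, h2⟩ := hm i
  obtain ⟨h3, h4⟩ := hm' i
  rw [hmm] at h1 h2
  rcases lt_trichotomy (l i) (l' i) with h | h | h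
  · nlinarith
  · exact h
  · nlinarith
end
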